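/- Let n ≥ 2. Every tame algebraic automorphism of ℂⁿ that fixes the origin is induced, via the projection π₁ : SL_n(ℂ) → ℂⁿ onto the first column, by some algebraic automorphism of SL_n(ℂ); i.e., for every such tame automorphism ψ there exists an algebraic automorphism φ of SL_n(ℂ) with π₁ ∘ φ = ψ ∘ π₁. -/

import Mathlib

open Matrix

noncomputable section

abbrev SL (n : ℕ) := Matrix.SpecialLinearGroup (Fin n) ℂ

/-- A self-map of `SL n ℂ` is regular (algebraic) if each matrix entry of the image is
given by a polynomial in the matrix entries of the argument. -/
def SLRegular {n : ℕ} (φ : SL n → SL n) : Prop :=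
  ∀ i j : Fin n, ∃ P : MvPolynomial (Fin n × Fin n) ℂ,
    ∀ X : SL n, (φ X : Matrix (Fin n) (Fin n) ℂ) i j =
      MvPolynomial.eval (fun kl => (X : Matrix (Fin n) (Fin n) ℂ) kl.1 kl.2) P

/-- An algebraic automorphism of `SL n ℂ`: a regular map with a regular inverse. -/
def SLAlgAut {n : ℕ} (φ : SL n → SL n) : Prop :=
  SLRegular φ ∧ ∃ ψ : SL n → SL n, SLRegular ψ ∧
    Function.LeftInverse ψ φ ∧ Function.RightInverse ψ φ

namespace Stmt3Aux
open MvPolynomial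

variable {n : ℕ}

lemma aeval_eq_eval' {σ : Type*} (f : σ → ℂ) (p : MvPolynomial σ ℂ) :
    MvPolynomial.aeval f p = MvPolynomial.eval f p := by
  rw [← MvPolynomial.coe_aeval_eq_eval]; rfl

def col (c : Fin n) (X : SL n) : Fin n → ℂ :=
  fun k => (X : Matrix (Fin n) (Fin n) ℂ) k c

def Lifts (c : Fin n) (f : (Fin n → ℂ) → (Fin n → ℂ)) : Prop :=
  ∃ φ : SL n → SL n, SLAlgAut φ ∧ ∀ X, col c (φ X) = f (col c X)

lemma SLRegular.comp {φ₂ φ₁ : SL n → SL n} (h₂ : SLRegular φ₂) (h₁ : SLRegular φ₁) :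
    SLRegular (φ₂ ∘ φ₁) := by
  intro i j
  obtain ⟨P₂, hP₂⟩ := h₂ i j
  choose Q hQ using fun kl : Fin n × Fin n => h₁ kl.1 kl.2
  refine ⟨bind₁ Q P₂, fun X => ?_⟩
  have : MvPolynomial.eval (fun kl => (X : Matrix (Fin n) (Fin n) ℂ) kl.1 kl.2) (bind₁ Q P₂)
      = MvPolynomial.eval (fun kl => ((φ₁ X : Matrix (Fin n) (Fin n) ℂ)) kl.1 kl.2) P₂ := by
    rw [← aeval_eq_eval', aeval_bind₁, ← aeval_eq_eval']
    have hfun : (fun kl : Fin n × Fin n =>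
        (aeval fun kl : Fin n × Fin n => (X : Matrix (Fin n) (Fin n) ℂ) kl.1 kl.2) (Q kl))
        = fun kl : Fin n × Fin n => ((φ₁ X : Matrix (Fin n) (Fin n) ℂ)) kl.1 kl.2 := by
      funext kl
      rw [aeval_eq_eval', ← hQ kl X]
    rw [hfun]
  rw [this, Function.comp_apply, hP₂]

lemma SLAlgAut.comp {φ₂ φ₁ : SL n → SL n} (h₂ : SLAlgAut φ₂) (h₁ : SLAlgAut φ₁) :
    SLAlgAut (φ₂ ∘ φ₁) := by
  obtain ⟨r₂, ψ₂, hr₂, li₂, ri₂⟩ := h₂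
  obtain ⟨r₁, ψ₁, hr₁, li₁, ri₁⟩ := h₁
  refine ⟨SLRegular.comp r₂ r₁, ψ₁ ∘ ψ₂, SLRegular.comp hr₁ hr₂, fun x => ?_, fun x => ?_⟩
  · show ψ₁ (ψ₂ (φ₂ (φ₁ x))) = x
    rw [li₂, li₁]
  · show φ₂ (φ₁ (ψ₁ (ψ₂ x))) = x
    rw [ri₁, ri₂]

lemma Lifts.congr {c : Fin n} {f f' : (Fin n → ℂ) → (Fin n → ℂ)}
    (h : Lifts c f) (hff' : ∀ v, f v = f' v) : Lifts c f' := by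
  obtain ⟨φ, hφ, hcol⟩ := h
  exact ⟨φ, hφ, fun X => (hcol X).trans (hff' _)⟩

lemma Lifts.comp {c : Fin n} {f₂ f₁ : (Fin n → ℂ) → (Fin n → ℂ)}
    (h₂ : Lifts c f₂) (h₁ : Lifts c f₁) : Lifts c (f₂ ∘ f₁) := by
  obtain ⟨φ₂, hφ₂, hcol₂⟩ := h₂
  obtain ⟨φ₁, hφ₁, hcol₁⟩ := h₁
  refine ⟨φ₂ ∘ φ₁, SLAlgAut.comp hφ₂ hφ₁, fun X => ?_⟩
  simp only [Function.comp_apply, hcol₂, hcol₁]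

lemma Lifts.of_inverse {c : Fin n} {f g : (Fin n → ℂ) → (Fin n → ℂ)}
    (h : Lifts c g) (_hgf : ∀ v, g (f v) = v) (hfg : ∀ v, f (g v) = v) : Lifts c f := by
  obtain ⟨φ, ⟨hreg, φ', hreg', li, ri⟩, hcol⟩ := h
  refine ⟨φ', ⟨hreg', φ, hreg, ri, li⟩, fun X => ?_⟩
  have h1 : col c X = g (col c (φ' X)) := by rw [← hcol, ri]
  rw [h1, hfg]

lemma lifts_id (c : Fin n) : Lifts c (fun v => v) := by
  refine ⟨id, ⟨?_, id, ?_, fun x => rfl, fun x => rfl⟩, fun X => rfl⟩ <;>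
  · intro i j
    exact ⟨MvPolynomial.X (i, j), fun X => by simp⟩


lemma slregular_of_linear (φ : SL n → SL n) (A C : Matrix (Fin n) (Fin n) ℂ)
    (h : ∀ X : SL n, (φ X : Matrix (Fin n) (Fin n) ℂ) = A * (X : Matrix (Fin n) (Fin n) ℂ) * C) :
    SLRegular φ := by
  intro i j
  refine ⟨∑ k : Fin n, ∑ l : Fin n, MvPolynomial.C (A i k * C l j) * MvPolynomial.X (k, l),
    fun X => ?_⟩
  rw [h]
  simp only [Matrix.mul_apply, Finset.sum_mul, map_sum, MvPolynomial.eval_mul,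
    MvPolynomial.eval_C, MvPolynomial.eval_X]
  rw [Finset.sum_comm]
  refine Finset.sum_congr rfl fun k _ => Finset.sum_congr rfl fun l _ => by ring

lemma lifts_linear (c : Fin n) (hn : 2 ≤ n) (A : Matrix (Fin n) (Fin n) ℂ)
    (hA : IsUnit A.det) : Lifts c (fun v => A.mulVec v) := by
  have hcard : 1 < Fintype.card (Fin n) := by rw [Fintype.card_fin]; omega
  obtain ⟨d, hd⟩ := Fintype.exists_ne_of_one_lt_card hcard c
  have hu : A.det ≠ 0 := hA.ne_zero
  set u := A.det with hudef
  set D : Matrix (Fin n) (Fin n) ℂ := Matrix.diagonal (fun j => if j = d then u⁻¹ else 1) with hD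
  set D' : Matrix (Fin n) (Fin n) ℂ := Matrix.diagonal (fun j => if j = d then u else 1) with hD'
  have hDdet : D.det = u⁻¹ := by
    rw [hD, Matrix.det_diagonal, Finset.prod_ite_eq' Finset.univ d (fun _ => u⁻¹)]
    simp
  have hD'det : D'.det = u := by
    rw [hD', Matrix.det_diagonal, Finset.prod_ite_eq' Finset.univ d (fun _ => u)]
    simp
  have hfun1 : (fun i : Fin n => (if i = d then u⁻¹ else 1) * (if i = d then u else 1))
      = fun _ : Fin n => (1:ℂ) := by
    funext j; by_cases hj : j = d <;> simp [hj, hu]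
  have hfun2 : (fun i : Fin n => (if i = d then u else 1) * (if i = d then u⁻¹ else 1))
      = fun _ : Fin n => (1:ℂ) := by
    funext j; by_cases hj : j = d <;> simp [hj, hu]
  have hDD' : D * D' = 1 := by
    rw [hD, hD', Matrix.diagonal_mul_diagonal, hfun1, Matrix.diagonal_one]
  have hD'D : D' * D = 1 := by
    rw [hD, hD', Matrix.diagonal_mul_diagonal, hfun2, Matrix.diagonal_one]
  refine ⟨fun X => ⟨A * (X : Matrix (Fin n) (Fin n) ℂ) * D, by
      rw [Matrix.det_mul, Matrix.det_mul, X.prop, hDdet, mul_one, mul_inv_cancel₀ hu]⟩,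
    ⟨?_, fun Y => ⟨A⁻¹ * (Y : Matrix (Fin n) (Fin n) ℂ) * D', by
      rw [Matrix.det_mul, Matrix.det_mul, Y.prop, hD'det, mul_one, Matrix.det_nonsing_inv,
        Ring.inverse_eq_inv, inv_mul_cancel₀ hu]⟩, ?_, ?_, ?_⟩, ?_⟩
  · exact slregular_of_linear _ A D (fun X => rfl)
  · exact slregular_of_linear _ A⁻¹ D' (fun X => rfl)
  · intro X
    apply Subtype.ext
    show A⁻¹ * (A * (X : Matrix (Fin n) (Fin n) ℂ) * D) * D' = _
    simp only [← Matrix.mul_assoc]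
    rw [Matrix.nonsing_inv_mul A hA, Matrix.one_mul, Matrix.mul_assoc, hDD', Matrix.mul_one]
  · intro Y
    apply Subtype.ext
    show A * (A⁻¹ * (Y : Matrix (Fin n) (Fin n) ℂ) * D') * D = _
    simp only [← Matrix.mul_assoc]
    rw [Matrix.mul_nonsing_inv A hA, Matrix.one_mul, Matrix.mul_assoc, hD'D, Matrix.mul_one]
  · intro X
    funext k
    show (A * (X : Matrix (Fin n) (Fin n) ℂ) * D) k c = A.mulVec (col c X) k
    rw [hD, Matrix.mul_diagonal, if_neg (Ne.symm hd), mul_one, Matrix.mul_apply]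
    simp [Matrix.mulVec, dotProduct, col]


lemma eval_congr_supported {i : Fin n} {H : MvPolynomial (Fin n) ℂ}
    (hH : H ∈ MvPolynomial.supported ℂ {j : Fin n | j ≠ i}) {x y : Fin n → ℂ}
    (hxy : ∀ j, j ≠ i → x j = y j) : MvPolynomial.eval x H = MvPolynomial.eval y H := by
  have hH' : H ∈ Algebra.adjoin ℂ (MvPolynomial.X '' {j : Fin n | j ≠ i}) := hH
  clear hH
  induction hH' using Algebra.adjoin_induction with
  | mem z hz =>
    obtain ⟨j, hj, rfl⟩ := hz
    simpa using hxy j hj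
  | algebraMap r => simp [MvPolynomial.algebraMap_eq]
  | add a b ha hb iha ihb => simp [iha, ihb]
  | mul a b ha hb iha ihb => simp [iha, ihb]

lemma decomp (i : Fin n) (H : MvPolynomial (Fin n) ℂ)
    (hH : H ∈ MvPolynomial.supported ℂ {j : Fin n | j ≠ i}) :
    ∃ (c : ℂ) (g : Fin n → MvPolynomial (Fin n) ℂ),
      (∀ j, g j ∈ MvPolynomial.supported ℂ {j : Fin n | j ≠ i}) ∧ g i = 0 ∧
      H = MvPolynomial.C c + ∑ j : Fin n, MvPolynomial.X j * g j := by
  have hH' : H ∈ Algebra.adjoin ℂ (MvPolynomial.X '' {j : Fin n | j ≠ i}) := hH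
  clear hH
  induction hH' using Algebra.adjoin_induction with
  | mem z hz =>
    obtain ⟨j, hj, rfl⟩ := hz
    refine ⟨0, fun k => if k = j then 1 else 0, fun k => ?_, ?_, ?_⟩
    · by_cases hk : k = j <;> simp [hk, Subalgebra.one_mem, Subalgebra.zero_mem]
    · have hij : i ≠ j := Ne.symm hj
      simp [hij]
    · have hsum : ∑ k : Fin n, MvPolynomial.X k *
          (if k = j then (1 : MvPolynomial (Fin n) ℂ) else 0) = MvPolynomial.X j := by
        simp only [mul_ite, mul_one, mul_zero]
        simp [Finset.sum_ite_eq']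
      show MvPolynomial.X j = MvPolynomial.C 0 + ∑ k : Fin n, MvPolynomial.X k *
          (if k = j then (1 : MvPolynomial (Fin n) ℂ) else 0)
      rw [hsum, map_zero, zero_add]
  | algebraMap r =>
    exact ⟨r, 0, fun k => Subalgebra.zero_mem _, rfl, by simp [MvPolynomial.algebraMap_eq]⟩
  | add a b ha hb iha ihb =>
    obtain ⟨c₁, g₁, hs₁, hi₁, hd₁⟩ := iha
    obtain ⟨c₂, g₂, hs₂, hi₂, hd₂⟩ := ihb
    refine ⟨c₁ + c₂, g₁ + g₂, fun k => Subalgebra.add_mem _ (hs₁ k) (hs₂ k), ?_, ?_⟩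
    · simp [hi₁, hi₂]
    · show a + b = MvPolynomial.C (c₁ + c₂) + ∑ k : Fin n, MvPolynomial.X k * (g₁ k + g₂ k)
      have hsum : ∑ k : Fin n, MvPolynomial.X k * (g₁ k + g₂ k)
          = (∑ k : Fin n, MvPolynomial.X k * g₁ k) + ∑ k : Fin n, MvPolynomial.X k * g₂ k := by
        rw [← Finset.sum_add_distrib]
        exact Finset.sum_congr rfl fun k _ => by ring
      rw [hsum, hd₁, hd₂, map_add]
      ring
  | mul a b ha hb iha ihb =>
    obtain ⟨c₁, g₁, hs₁, hi₁, hd₁⟩ := iha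
    obtain ⟨c₂, g₂, hs₂, hi₂, hd₂⟩ := ihb
    have hbmem : b ∈ MvPolynomial.supported ℂ {j : Fin n | j ≠ i} := hb
    refine ⟨c₁ * c₂, fun k => MvPolynomial.C c₁ * g₂ k + g₁ k * b, fun k => ?_, ?_, ?_⟩
    · exact Subalgebra.add_mem _ (Subalgebra.mul_mem _ (Subalgebra.algebraMap_mem _ c₁) (hs₂ k))
        (Subalgebra.mul_mem _ (hs₁ k) hbmem)
    · simp [hi₁, hi₂]
    · show a * b = MvPolynomial.C (c₁ * c₂)
        + ∑ k : Fin n, MvPolynomial.X k * (MvPolynomial.C c₁ * g₂ k + g₁ k * b)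
      have hsum : ∑ k : Fin n, MvPolynomial.X k * (MvPolynomial.C c₁ * g₂ k + g₁ k * b)
          = MvPolynomial.C c₁ * (∑ k : Fin n, MvPolynomial.X k * g₂ k)
            + (∑ k : Fin n, MvPolynomial.X k * g₁ k) * b := by
        rw [Finset.mul_sum, Finset.sum_mul, ← Finset.sum_add_distrib]
        exact Finset.sum_congr rfl fun k _ => by ring
      rw [hsum, MvPolynomial.C_mul, hd₂, hd₁]
      ring


lemma det_updateRow_one (i : Fin n) (w : Fin n → ℂ) (hw : w i = 1) :
    ((1 : Matrix (Fin n) (Fin n) ℂ).updateRow i w).det = 1 := by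
  have h1 : ((1 : Matrix (Fin n) (Fin n) ℂ).updateCol i w).det = w i := by
    rw [← Matrix.cramer_apply, Matrix.cramer_one]
    rfl
  have h2 : ((1 : Matrix (Fin n) (Fin n) ℂ).updateCol i w)ᵀ
      = (1 : Matrix (Fin n) (Fin n) ℂ).updateRow i w := by
    rw [← Matrix.updateRow_transpose, Matrix.transpose_one]
  rw [← h2, Matrix.det_transpose, h1, hw]

lemma updateRow_mul_apply (i : Fin n) (r : Fin n → ℂ) (Y : Matrix (Fin n) (Fin n) ℂ)
    (k b : Fin n) :
    ((1 : Matrix (Fin n) (Fin n) ℂ).updateRow i r * Y) k b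
      = if k = i then ∑ l, r l * Y l b else Y k b := by
  rw [Matrix.mul_apply]
  by_cases hk : k = i
  · subst hk
    simp [Matrix.updateRow_apply]
  · rw [if_neg hk]
    rw [Finset.sum_congr rfl (fun l _ => show (1 : Matrix (Fin n) (Fin n) ℂ).updateRow i r k l
        * Y l b = if l = k then Y l b else 0 by
      rw [Matrix.updateRow_apply, if_neg hk, Matrix.one_apply]
      by_cases hl : l = k
      · simp [hl, eq_comm]
      · simp [hl, Ne.symm hl]
      )]
    simp [Finset.sum_ite_eq']

lemma updateRow_mul (i : Fin n) (w w' : Fin n → ℂ) (hw : w i = 1) (hw' : w' i = 1)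
    (hrel : ∀ j, j ≠ i → w' j = - w j) :
    (1 : Matrix (Fin n) (Fin n) ℂ).updateRow i w' * (1 : Matrix (Fin n) (Fin n) ℂ).updateRow i w
      = 1 := by
  ext a b
  rw [updateRow_mul_apply]
  by_cases ha : a = i
  · subst ha
    rw [if_pos rfl]
    have hterm : ∀ l, w' l * (1 : Matrix (Fin n) (Fin n) ℂ).updateRow a w l b
        = (if l = a then w b else 0) + (if l = b then (if b = a then 0 else w' b) else 0) := by
      intro l
      rw [Matrix.updateRow_apply]
      by_cases hl : l = a
      · rw [if_pos hl, if_pos hl, hl, hw', one_mul]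
        by_cases hb : a = b
        · simp [hb]
        · simp [hb, Ne.symm hb]
      · rw [if_neg hl, if_neg hl, Matrix.one_apply, zero_add]
        by_cases hlb : l = b
        · have hba : b ≠ a := fun h => hl (hlb.trans h)
          simp [hlb, hba]
        · simp [hlb]
    rw [Finset.sum_congr rfl fun l _ => hterm l, Finset.sum_add_distrib,
      Finset.sum_ite_eq' Finset.univ a fun _ => w b,
      Finset.sum_ite_eq' Finset.univ b fun _ => if b = a then 0 else w' b]
    simp only [Finset.mem_univ, if_true]
    by_cases hb : b = a
    · rw [if_pos hb, hb, hw, add_zero, Matrix.one_apply_eq]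
    · rw [if_neg hb, hrel b hb, add_neg_cancel, Matrix.one_apply_ne (Ne.symm hb)]
  · rw [if_neg ha, Matrix.updateRow_apply, if_neg ha]


def mkRow (i : Fin n) (g : Fin n → MvPolynomial (Fin n) ℂ) (v : Fin n → ℂ) : Fin n → ℂ :=
  fun j => if j = i then 1 else MvPolynomial.eval v (g j)

lemma mkRow_i (i : Fin n) (g : Fin n → MvPolynomial (Fin n) ℂ) (v : Fin n → ℂ) :
    mkRow i g v i = 1 := if_pos rfl

def mkM (i : Fin n) (g : Fin n → MvPolynomial (Fin n) ℂ) (v : Fin n → ℂ) :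
    Matrix (Fin n) (Fin n) ℂ :=
  (1 : Matrix (Fin n) (Fin n) ℂ).updateRow i (mkRow i g v)

def mkPhi (i : Fin n) (g : Fin n → MvPolynomial (Fin n) ℂ) (cc : Fin n) (X : SL n) : SL n :=
  ⟨mkM i g (col cc X) * (X : Matrix (Fin n) (Fin n) ℂ), by
    rw [Matrix.det_mul, X.prop, mul_one, mkM, det_updateRow_one i _ (mkRow_i i g _)]⟩

lemma col_mkPhi (i : Fin n) (g : Fin n → MvPolynomial (Fin n) ℂ) (hgi : g i = 0)
    (cc : Fin n) (X : SL n) (k : Fin n) :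
    col cc (mkPhi i g cc X) k
      = if k = i then col cc X i
          + ∑ l, MvPolynomial.eval (col cc X) (g l) * col cc X l
        else col cc X k := by
  show (mkM i g (col cc X) * (X : Matrix (Fin n) (Fin n) ℂ)) k cc = _
  rw [mkM, updateRow_mul_apply]
  by_cases hk : k = i
  · rw [if_pos hk, if_pos hk]
    have hterm : ∀ l, mkRow i g (col cc X) l * (X : Matrix (Fin n) (Fin n) ℂ) l cc
        = (if l = i then col cc X i else 0)
          + MvPolynomial.eval (col cc X) (g l) * col cc X l := by
      intro l
      rw [mkRow]
      by_cases hl : l = i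
      · rw [if_pos hl, if_pos hl, one_mul, hl, hgi]
        show col cc X i = col cc X i + MvPolynomial.eval (col cc X) 0 * col cc X i
        rw [map_zero, zero_mul, add_zero]
      · rw [if_neg hl, if_neg hl, zero_add]
        rfl
    rw [Finset.sum_congr rfl fun l _ => hterm l, Finset.sum_add_distrib,
      Finset.sum_ite_eq' Finset.univ i fun _ => col cc X i]
    simp only [Finset.mem_univ, if_true]
  · rw [if_neg hk, if_neg hk]
    rfl

lemma mkPhi_inv (i : Fin n) (g : Fin n → MvPolynomial (Fin n) ℂ) (hgi : g i = 0)
    (hgs : ∀ j, g j ∈ MvPolynomial.supported ℂ {j : Fin n | j ≠ i}) (cc : Fin n) (X : SL n) :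
    mkPhi i (-g) cc (mkPhi i g cc X) = X := by
  apply Subtype.ext
  show mkM i (-g) (col cc (mkPhi i g cc X)) * (mkM i g (col cc X) * (X : Matrix (Fin n) (Fin n) ℂ))
      = (X : Matrix (Fin n) (Fin n) ℂ)
  have hrow : mkRow i (-g) (col cc (mkPhi i g cc X)) = mkRow i (-g) (col cc X) := by
    funext j
    rw [mkRow, mkRow]
    by_cases hj : j = i
    · rw [if_pos hj, if_pos hj]
    · rw [if_neg hj, if_neg hj]
      exact eval_congr_supported (i := i) (Subalgebra.neg_mem _ (hgs j)) fun l hl => by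
        rw [col_mkPhi i g hgi cc X l, if_neg hl]
  have hmul : mkM i (-g) (col cc X) * mkM i g (col cc X) = 1 := by
    rw [mkM, mkM]
    refine updateRow_mul i _ _ (mkRow_i _ _ _) (mkRow_i _ _ _) fun j hj => ?_
    rw [mkRow, mkRow, if_neg hj, if_neg hj, Pi.neg_apply, map_neg]
  rw [mkM, hrow, ← mkM, ← Matrix.mul_assoc, hmul, Matrix.one_mul]

lemma mkPhi_regular (i : Fin n) (g : Fin n → MvPolynomial (Fin n) ℂ) (cc : Fin n) :
    SLRegular (mkPhi i g cc) := by
  intro a b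
  refine ⟨∑ l : Fin n, (if a = i then (if l = i then 1
      else MvPolynomial.bind₁ (fun j => MvPolynomial.X (j, cc)) (g l))
      else MvPolynomial.C ((1 : Matrix (Fin n) (Fin n) ℂ) a l)) * MvPolynomial.X (l, b),
    fun X => ?_⟩
  show (mkM i g (col cc X) * (X : Matrix (Fin n) (Fin n) ℂ)) a b = _
  rw [Matrix.mul_apply, map_sum]
  refine Finset.sum_congr rfl fun l _ => ?_
  rw [MvPolynomial.eval_mul, MvPolynomial.eval_X]
  refine congrArg₂ _ ?_ rfl
  rw [mkM, Matrix.updateRow_apply]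
  by_cases ha : a = i
  · rw [if_pos ha, if_pos ha, mkRow]
    by_cases hl : l = i
    · rw [if_pos hl, if_pos hl, _root_.map_one]
    · rw [if_neg hl, if_neg hl,
        ← aeval_eq_eval' (fun kl : Fin n × Fin n => (X : Matrix (Fin n) (Fin n) ℂ) kl.1 kl.2),
        MvPolynomial.aeval_bind₁, ← aeval_eq_eval' (col cc X)]
      have hfun : (fun j => (MvPolynomial.aeval
          fun kl : Fin n × Fin n => (X : Matrix (Fin n) (Fin n) ℂ) kl.1 kl.2)
          (MvPolynomial.X (j, cc) : MvPolynomial (Fin n × Fin n) ℂ)) = col cc X := by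
        funext j
        simp [col]
      rw [hfun]
  · rw [if_neg ha, if_neg ha, MvPolynomial.eval_C]

lemma lifts_elem (cc i : Fin n) (H : MvPolynomial (Fin n) ℂ)
    (hH : H ∈ MvPolynomial.supported ℂ {j : Fin n | j ≠ i})
    (hH0 : MvPolynomial.eval (0 : Fin n → ℂ) H = 0) :
    Lifts cc (fun v j => if j = i then v i + MvPolynomial.eval v H else v j) := by
  obtain ⟨c, g, hgs, hgi, hdec⟩ := decomp i H hH
  have hc : c = 0 := by
    have := hH0
    rw [hdec] at this
    simpa using this
  subst hc
  have hevH : ∀ v : Fin n → ℂ, MvPolynomial.eval v H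
      = ∑ l, MvPolynomial.eval v (g l) * v l := by
    intro v
    rw [hdec, map_add, map_sum]
    simp only [MvPolynomial.eval_mul, MvPolynomial.eval_X, MvPolynomial.eval_C, zero_add]
    exact Finset.sum_congr rfl fun l _ => mul_comm _ _
  have hgs' : ∀ j, (-g) j ∈ MvPolynomial.supported ℂ {j : Fin n | j ≠ i} :=
    fun j => Subalgebra.neg_mem _ (hgs j)
  have hgi' : (-g) i = 0 := by simp [hgi]
  refine ⟨mkPhi i g cc, ⟨mkPhi_regular i g cc, mkPhi i (-g) cc, mkPhi_regular i (-g) cc,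
    fun X => mkPhi_inv i g hgi hgs cc X, fun X => ?_⟩, fun X => ?_⟩
  · have := mkPhi_inv i (-g) hgi' hgs' cc X
    rwa [neg_neg] at this
  · funext k
    rw [col_mkPhi i g hgi cc X k, ← hevH (col cc X)]

end Stmt3Aux

/-- An invertible affine-linear self-map of `ℂⁿ`. -/
def IsAffineAut (n : ℕ) (e : (Fin n → ℂ) → (Fin n → ℂ)) : Prop :=
  ∃ A : Matrix (Fin n) (Fin n) ℂ, IsUnit A.det ∧ ∃ b : Fin n → ℂ,
    ∀ v, e v = A.mulVec v + b

/-- An elementary automorphism of `ℂⁿ`: it adds to one coordinate a polynomial in the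
other coordinates. -/
def IsElemAut (n : ℕ) (e : (Fin n → ℂ) → (Fin n → ℂ)) : Prop :=
  ∃ i : Fin n, ∃ h : MvPolynomial (Fin n) ℂ,
    h ∈ MvPolynomial.supported ℂ {j : Fin n | j ≠ i} ∧
    ∀ v j, e v j = if j = i then v i + MvPolynomial.eval v h else v j

/-- A tame automorphism of `ℂⁿ`: an element of the group generated by invertible affine
maps and elementary automorphisms. -/
def IsTame (n : ℕ) (ψ : Equiv.Perm (Fin n → ℂ)) : Prop :=
  ψ ∈ Subgroup.closure {e : Equiv.Perm (Fin n → ℂ) | IsAffineAut n ⇑e ∨ IsElemAut n ⇑e}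

namespace Stmt3Aux

lemma bind_supported {n : ℕ} (i : Fin n) (p : Fin n → ℂ) (h : MvPolynomial (Fin n) ℂ)
    (hsupp : h ∈ MvPolynomial.supported ℂ {j : Fin n | j ≠ i}) :
    MvPolynomial.bind₁ (fun j => MvPolynomial.X j + MvPolynomial.C (p j)) h
      ∈ MvPolynomial.supported ℂ {j : Fin n | j ≠ i} := by
  have hsupp' : h ∈ Algebra.adjoin ℂ (MvPolynomial.X '' {j : Fin n | j ≠ i}) := hsupp
  clear hsupp
  induction hsupp' using Algebra.adjoin_induction with
  | mem z hz =>
    obtain ⟨j, hj, rfl⟩ := hz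
    rw [MvPolynomial.bind₁_X_right]
    exact Subalgebra.add_mem _ (Algebra.subset_adjoin ⟨j, hj, rfl⟩)
      (Subalgebra.algebraMap_mem _ _)
  | algebraMap r =>
    rw [AlgHom.commutes]
    exact Subalgebra.algebraMap_mem _ _
  | add a b ha hb iha ihb =>
    rw [map_add]; exact Subalgebra.add_mem _ iha ihb
  | mul a b ha hb iha ihb =>
    rw [_root_.map_mul]; exact Subalgebra.mul_mem _ iha ihb

lemma key_lemma {n : ℕ} (hn : 2 ≤ n) (cc : Fin n) (ψ : Equiv.Perm (Fin n → ℂ))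
    (htame : IsTame n ψ) :
    ∀ p : Fin n → ℂ, Lifts cc (fun v => ψ (v + p) - ψ p) := by
  unfold IsTame at htame
  induction htame using Subgroup.closure_induction with
  | mem e he =>
    intro p
    rcases he with haff | helem
    · obtain ⟨A, hA, b, hAb⟩ := haff
      refine (lifts_linear cc hn A hA).congr fun v => ?_
      rw [hAb, hAb, Matrix.mulVec_add]
      funext j
      simp
    · obtain ⟨i, h, hsupp, he⟩ := helem
      set H : MvPolynomial (Fin n) ℂ :=
        MvPolynomial.bind₁ (fun j => MvPolynomial.X j + MvPolynomial.C (p j)) h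
          - MvPolynomial.C (MvPolynomial.eval p h) with hHdef
      have hevalH : ∀ v : Fin n → ℂ, MvPolynomial.eval v H
          = MvPolynomial.eval (v + p) h - MvPolynomial.eval p h := by
        intro v
        rw [hHdef, _root_.map_sub, MvPolynomial.eval_C, ← aeval_eq_eval' v, MvPolynomial.aeval_bind₁]
        have hfun : (fun j => (MvPolynomial.aeval v)
            (MvPolynomial.X j + MvPolynomial.C (p j))) = v + p := by
          funext j
          simp
        rw [hfun, aeval_eq_eval']
      have hH0 : MvPolynomial.eval (0 : Fin n → ℂ) H = 0 := by
        rw [hevalH, zero_add, sub_self]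
      have hHsupp : H ∈ MvPolynomial.supported ℂ {j : Fin n | j ≠ i} := by
        rw [hHdef]
        exact Subalgebra.sub_mem _ (bind_supported i p h hsupp) (Subalgebra.algebraMap_mem _ _)
      refine (lifts_elem cc i H hHsupp hH0).congr fun v => ?_
      funext j
      rw [Pi.sub_apply, he, he]
      by_cases hj : j = i
      · rw [if_pos hj, if_pos hj, if_pos hj, hevalH]
        show v i + (MvPolynomial.eval (v + p) h - MvPolynomial.eval p h)
          = ((v + p) i + MvPolynomial.eval (v + p) h) - (p i + MvPolynomial.eval p h)
        simp only [Pi.add_apply]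
        ring
      · rw [if_neg hj, if_neg hj, if_neg hj]
        show v j = (v + p) j - p j
        simp
  | one =>
    intro p
    refine (lifts_id cc).congr fun v => ?_
    funext j
    simp
  | mul x y hx hy ihx ihy =>
    intro p
    have h1 := ihy p
    have h2 := ihx (y p)
    refine (h2.comp h1).congr fun v => ?_
    funext j
    show x ((y (v + p) - y p) + y p) j - x (y p) j = (x * y) (v + p) j - (x * y) p j
    rw [sub_add_cancel]
    rfl
  | inv x hx ih =>
    intro p
    have hg : Lifts cc (fun v => x (v + x⁻¹ p) - p) := by
      refine (ih (x⁻¹ p)).congr fun v => ?_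
      rw [Equiv.Perm.coe_inv, Equiv.apply_symm_apply]
    refine hg.of_inverse (fun v => ?_) (fun v => ?_)
    · show x ((x⁻¹ (v + p) - x⁻¹ p) + x⁻¹ p) - p = v
      rw [sub_add_cancel, Equiv.Perm.coe_inv, Equiv.apply_symm_apply]
      simp
    · show x⁻¹ ((x (v + x⁻¹ p) - p) + p) - x⁻¹ p = v
      rw [sub_add_cancel, Equiv.Perm.coe_inv, Equiv.symm_apply_apply]
      simp

end Stmt3Aux

theorem stmt_3 (n : ℕ) (hn : 2 ≤ n) (ψ : Equiv.Perm (Fin n → ℂ))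
    (htame : IsTame n ψ) (h0 : ψ 0 = 0) :
    ∃ φ : SL n → SL n, SLAlgAut φ ∧
      ∀ X : SL n,
        (fun i : Fin n => (φ X : Matrix (Fin n) (Fin n) ℂ) i ⟨0, by omega⟩) =
          ψ (fun k : Fin n => (X : Matrix (Fin n) (Fin n) ℂ) k ⟨0, by omega⟩) := by
  obtain ⟨φ, hφ, hcol⟩ := Stmt3Aux.key_lemma hn ⟨0, by omega⟩ ψ htame 0
  refine ⟨φ, hφ, fun X => ?_⟩
  have h := hcol X
  simp only [add_zero, h0, sub_zero] at h
  exact h
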